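/- For the monic Laguerre polynomial L_n(x) = (b)_n · Σ_{m=0}^n (-1)^{m-n} · (n falling m) / ((b)_m · m!) · x^m, its squared norm with respect to the gamma distribution γ_b(dx) = (1/Γ(b)) x^{b-1} e^{-x} dx on [0,∞) equals (b)_n · n!, i.e. ∫_0^∞ L_n(x)^2 γ_b(dx) = (b)_n · n!. -/

import Mathlib

open MeasureTheory Finset

/-- `Γ(b + k) = (b)_k Γ(b)`. -/
lemma Gamma_add_nat_aux (b : ℝ) (hb : 0 < b) (k : ℕ) :
    Real.Gamma (b + k) = (ascPochhammer ℝ k).eval b * Real.Gamma b := by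
  induction k with
  | zero => simp
  | succ k ih =>
    have h : b + ((k : ℕ) + 1 : ℕ) = (b + k) + 1 := by push_cast; ring
    have hpos : (0:ℝ) < b + k := by positivity
    rw [h, Real.Gamma_add_one hpos.ne', ih, ascPochhammer_succ_eval]
    ring

lemma moment_aux (b : ℝ) (hb : 0 < b) (k : ℕ) :
    ∫ x in Set.Ioi (0:ℝ), x ^ k * (x ^ (b - 1) * Real.exp (-x) / Real.Gamma b)
      = (ascPochhammer ℝ k).eval b := by
  have h1 : (0:ℝ) < b + k := by positivity
  have hΓ : (0:ℝ) < Real.Gamma b := Real.Gamma_pos_of_pos hb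
  have hcongr : ∀ x ∈ Set.Ioi (0:ℝ),
      x ^ k * (x ^ (b - 1) * Real.exp (-x) / Real.Gamma b)
        = Real.exp (-x) * x ^ (b + k - 1) / Real.Gamma b := by
    intro x hx
    have hx0 : (0:ℝ) < x := hx
    rw [show b + (k:ℝ) - 1 = (b - 1) + k by ring, Real.rpow_add hx0, Real.rpow_natCast]
    ring
  rw [setIntegral_congr_fun measurableSet_Ioi hcongr]
  rw [integral_div, ← Real.Gamma_eq_integral h1, Gamma_add_nat_aux b hb k,
    mul_div_assoc, div_self hΓ.ne', mul_one]

lemma integ_aux (b : ℝ) (hb : 0 < b) (k : ℕ) :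
    IntegrableOn (fun x : ℝ => x ^ k * (x ^ (b - 1) * Real.exp (-x) / Real.Gamma b))
      (Set.Ioi (0:ℝ)) := by
  have h1 : (0:ℝ) < b + k := by positivity
  have h := (Real.GammaIntegral_convergent h1).div_const (Real.Gamma b)
  refine IntegrableOn.congr_fun h (fun x hx => ?_) measurableSet_Ioi
  have hx0 : (0:ℝ) < x := hx
  rw [show b + (k:ℝ) - 1 = (b - 1) + k by ring, Real.rpow_add hx0, Real.rpow_natCast]
  ring

/-- difference formula for Pochhammer -/
lemma asc_diff_aux (j : ℕ) (x : ℝ) :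
    (ascPochhammer ℝ (j+1)).eval (x + 1) - (ascPochhammer ℝ (j+1)).eval x
      = (j + 1 : ℝ) * (ascPochhammer ℝ j).eval (x + 1) := by
  have e1 : (ascPochhammer ℝ (j+1)).eval (x+1)
      = (ascPochhammer ℝ j).eval (x+1) * ((x+1) + j) := ascPochhammer_succ_eval j (x+1)
  have e2 : (ascPochhammer ℝ (j+1)).eval x = x * (ascPochhammer ℝ j).eval (x+1) := by
    rw [ascPochhammer_succ_left]
    simp [Polynomial.eval_comp]
  rw [e1, e2]; ring

/-- alternating binomial sum against shifted Pochhammer values -/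
lemma T_eq_aux (j : ℕ) : ∀ (n : ℕ) (b : ℝ), j ≤ n →
    ∑ m ∈ Finset.range (n+1), (-1:ℝ)^m * (n.choose m : ℝ) * (ascPochhammer ℝ j).eval (b + m)
      = if j = n then (-1:ℝ)^n * (n.factorial : ℝ) else 0 := by
  induction j with
  | zero =>
    intro n b _
    simp only [ascPochhammer_zero, Polynomial.eval_one, mul_one]
    rcases eq_or_ne n 0 with rfl | hn
    · simp
    · rw [if_neg (fun h => hn h.symm)]
      have h := Int.alternating_sum_range_choose_of_ne hn
      exact_mod_cast h
  | succ j ih =>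
    intro n b hjn
    obtain ⟨k, rfl⟩ : ∃ k, n = k + 1 := ⟨n - 1, by omega⟩
    set P : ℕ → ℝ := fun m => (ascPochhammer ℝ (j+1)).eval (b + m) with hP
    have hdiff : ∀ i : ℕ, P (i+1) - P i = (j+1 : ℝ) * (ascPochhammer ℝ j).eval ((b+1) + i) := by
      intro i
      have h := asc_diff_aux j (b + i)
      have h2 : b + ((i:ℕ)+1 : ℕ) = (b + i) + 1 := by push_cast; ring
      have h3 : (b + 1) + (i:ℝ) = (b + i) + 1 := by ring
      rw [hP]; simp only []
      rw [h2, h3, h]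
    have expand : ∑ m ∈ Finset.range (k+1+1), (-1:ℝ)^m * ((k+1).choose m : ℝ) * P m
        = (∑ i ∈ Finset.range (k+1),
            ((-1:ℝ)^(i+1) * (k.choose i : ℝ) * P (i+1)
              + (-1:ℝ)^(i+1) * (k.choose (i+1) : ℝ) * P (i+1))) + P 0 := by
      rw [Finset.sum_range_succ']
      congr 1
      · refine Finset.sum_congr rfl fun i _ => ?_
        rw [Nat.choose_succ_succ]
        push_cast
        ring
      · simp
    have hA : (∑ i ∈ Finset.range (k+1), (-1:ℝ)^(i+1) * (k.choose (i+1) : ℝ) * P (i+1)) + P 0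
        = ∑ m ∈ Finset.range (k+1), (-1:ℝ)^m * (k.choose m : ℝ) * P m := by
      have h := Finset.sum_range_succ' (fun m => (-1:ℝ)^m * (k.choose m : ℝ) * P m) (k+1)
      rw [Finset.sum_range_succ] at h
      simp only [Nat.choose_succ_self, Nat.cast_zero, mul_zero, zero_mul, add_zero] at h
      simpa using h.symm
    have step : ∑ m ∈ Finset.range (k+1+1), (-1:ℝ)^m * ((k+1).choose m : ℝ) * P m
        = ∑ i ∈ Finset.range (k+1),
            (-(j+1) : ℝ) * ((-1:ℝ)^i * (k.choose i : ℝ)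
              * (ascPochhammer ℝ j).eval ((b+1) + i)) := by
      rw [expand, Finset.sum_add_distrib, add_assoc, hA, ← Finset.sum_add_distrib]
      refine Finset.sum_congr rfl fun i _ => ?_
      have h := hdiff i
      rw [pow_succ]
      linear_combination (-((-1:ℝ)^i * (k.choose i : ℝ))) * h
    rw [step, ← Finset.mul_sum, ih k (b+1) (by omega)]
    rcases eq_or_ne j k with rfl | hjk
    · rw [if_pos rfl, if_pos rfl]
      rw [pow_succ, Nat.factorial_succ]
      push_cast
      ring
    · rw [if_neg hjk, if_neg (fun h => hjk (by omega)), mul_zero]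

lemma key_aux (b : ℝ) (hb : 0 < b) (n j : ℕ) (hj : j ≤ n) :
    ∑ m ∈ Finset.range (n+1),
      ((ascPochhammer ℝ n).eval b *
        ((-1:ℝ)^(n-m) * (Nat.descFactorial n m : ℝ) /
          ((ascPochhammer ℝ m).eval b * (Nat.factorial m : ℝ))))
        * (ascPochhammer ℝ (m+j)).eval b
      = if j = n then (ascPochhammer ℝ n).eval b * (n.factorial : ℝ) else 0 := by
  have hterm : ∀ m ∈ Finset.range (n+1),
      ((ascPochhammer ℝ n).eval b *
        ((-1:ℝ)^(n-m) * (Nat.descFactorial n m : ℝ) /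
          ((ascPochhammer ℝ m).eval b * (Nat.factorial m : ℝ))))
        * (ascPochhammer ℝ (m+j)).eval b
      = (ascPochhammer ℝ n).eval b * ((-1:ℝ)^n *
          ((-1:ℝ)^m * (n.choose m : ℝ) * (ascPochhammer ℝ j).eval (b + m))) := by
    intro m hm
    have hm' : m ≤ n := by simpa [Nat.lt_succ_iff] using hm
    have hpm : (0:ℝ) < (ascPochhammer ℝ m).eval b := ascPochhammer_pos m b hb
    have hfm : (0:ℝ) < (Nat.factorial m : ℝ) := by positivity
    have hmul : (ascPochhammer ℝ (m+j)).eval b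
        = (ascPochhammer ℝ m).eval b * (ascPochhammer ℝ j).eval (b + m) := by
      rw [← ascPochhammer_mul]
      simp [Polynomial.eval_comp]
    have hdesc : (Nat.descFactorial n m : ℝ) = (Nat.factorial m : ℝ) * (n.choose m : ℝ) := by
      exact_mod_cast congrArg (Nat.cast : ℕ → ℝ) (Nat.descFactorial_eq_factorial_mul_choose n m)
    have hsign : ((-1:ℝ))^(n-m) = (-1:ℝ)^n * (-1:ℝ)^m := by
      have h1 : ((-1:ℝ))^(n-m) * (-1:ℝ)^m = (-1:ℝ)^n := by
        rw [← pow_add, Nat.sub_add_cancel hm']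
      have h2 : ((-1:ℝ))^m * (-1:ℝ)^m = 1 := by
        rw [← pow_add]
        exact Even.neg_one_pow ⟨m, rfl⟩
      calc ((-1:ℝ))^(n-m) = ((-1:ℝ))^(n-m) * (((-1:ℝ))^m * (-1:ℝ)^m) := by rw [h2, mul_one]
        _ = (((-1:ℝ))^(n-m) * (-1:ℝ)^m) * (-1:ℝ)^m := by ring
        _ = (-1:ℝ)^n * (-1:ℝ)^m := by rw [h1]
    rw [hmul, hdesc, hsign]
    field_simp
  rw [Finset.sum_congr rfl hterm, ← Finset.mul_sum, ← Finset.mul_sum,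
    T_eq_aux j n b hj]
  rcases eq_or_ne j n with rfl | hjn
  · rw [if_pos rfl, if_pos rfl]
    have h2 : ((-1:ℝ))^j * ((-1:ℝ)^j * (j.factorial : ℝ)) = (j.factorial : ℝ) := by
      rw [← mul_assoc, ← pow_add]
      rw [Even.neg_one_pow ⟨j, rfl⟩, one_mul]
    rw [h2]
  · rw [if_neg hjn, if_neg hjn, mul_zero, mul_zero]

/-- The monic Laguerre polynomial with parameter `b`, as a function of `x`:
`L_n(x) = (b)_n * ∑_{m=0}^n (-1)^{n-m} n↓m / ((b)_m m!) x^m`. -/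
noncomputable def laguerre (b : ℝ) (n : ℕ) (x : ℝ) : ℝ :=
  (ascPochhammer ℝ n).eval b *
    ∑ m ∈ Finset.range (n + 1),
      (-1 : ℝ) ^ (n - m) * (Nat.descFactorial n m : ℝ) /
        ((ascPochhammer ℝ m).eval b * (Nat.factorial m : ℝ)) * x ^ m

/-- The squared norm of the monic Laguerre polynomial `L_n` with respect to the
gamma distribution `γ_b(dx) = x^(b-1) e^(-x)/Γ(b) dx` on `(0,∞)` equals `(b)_n n!`. -/
theorem laguerre_squared_norm (b : ℝ) (hb : 0 < b) (n : ℕ) :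
    ∫ x in Set.Ioi (0 : ℝ),
        (laguerre b n x) ^ 2 * (x ^ (b - 1) * Real.exp (-x) / Real.Gamma b) =
      (ascPochhammer ℝ n).eval b * (Nat.factorial n : ℝ) := by
  set c : ℕ → ℝ := fun m => (ascPochhammer ℝ n).eval b *
      ((-1:ℝ)^(n-m) * (Nat.descFactorial n m : ℝ) /
        ((ascPochhammer ℝ m).eval b * (Nat.factorial m : ℝ))) with hc
  have hLag : ∀ x : ℝ, laguerre b n x = ∑ m ∈ Finset.range (n+1), c m * x ^ m := by
    intro x
    rw [laguerre, Finset.mul_sum]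
    exact Finset.sum_congr rfl fun m _ => by rw [hc]; ring
  have hexp : ∀ x : ℝ, laguerre b n x ^ 2 * (x ^ (b-1) * Real.exp (-x) / Real.Gamma b)
      = ∑ p ∈ Finset.range (n+1) ×ˢ Finset.range (n+1),
          (c p.1 * c p.2) * (x ^ (p.1 + p.2) * (x ^ (b-1) * Real.exp (-x) / Real.Gamma b)) := by
    intro x
    rw [hLag x, sq, Finset.sum_mul_sum, Finset.sum_product, Finset.sum_mul]
    simp only [Finset.sum_mul]
    refine Finset.sum_congr rfl fun i _ => Finset.sum_congr rfl fun j _ => ?_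
    rw [pow_add]; ring
  have hint : ∫ x in Set.Ioi (0:ℝ),
      (laguerre b n x) ^ 2 * (x ^ (b-1) * Real.exp (-x) / Real.Gamma b)
      = ∑ p ∈ Finset.range (n+1) ×ˢ Finset.range (n+1),
          (c p.1 * c p.2) * (ascPochhammer ℝ (p.1 + p.2)).eval b := by
    simp_rw [hexp]
    rw [integral_finset_sum _ (fun p _ => ((integ_aux b hb (p.1+p.2)).const_mul _))]
    refine Finset.sum_congr rfl fun p _ => ?_
    rw [MeasureTheory.integral_const_mul, moment_aux b hb (p.1+p.2)]
  rw [hint, Finset.sum_product]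
  have inner : ∀ m ∈ Finset.range (n+1),
      ∑ l ∈ Finset.range (n+1), (c m * c l) * (ascPochhammer ℝ (m+l)).eval b
        = c m * (if m = n then (ascPochhammer ℝ n).eval b * (n.factorial : ℝ) else 0) := by
    intro m hm
    have hm' : m ≤ n := by simpa [Nat.lt_succ_iff] using hm
    have h1 : ∑ l ∈ Finset.range (n+1), (c m * c l) * (ascPochhammer ℝ (m+l)).eval b
        = c m * ∑ l ∈ Finset.range (n+1), c l * (ascPochhammer ℝ (l+m)).eval b := by
      rw [Finset.mul_sum]
      refine Finset.sum_congr rfl fun l _ => ?_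
      rw [add_comm m l]; ring
    rw [h1, key_aux b hb n m hm']
  rw [Finset.sum_congr rfl inner]
  simp only [mul_ite, mul_zero]
  rw [Finset.sum_ite_eq' (Finset.range (n+1)) n
    (fun m => c m * ((ascPochhammer ℝ n).eval b * (n.factorial : ℝ)))]
  rw [if_pos (Finset.self_mem_range_succ n)]
  have hpn : (0:ℝ) < (ascPochhammer ℝ n).eval b := ascPochhammer_pos n b hb
  have hfn : (0:ℝ) < (n.factorial : ℝ) := by positivity
  have hcn : c n = 1 := by
    rw [hc]
    simp only [Nat.sub_self, pow_zero, Nat.descFactorial_self, one_mul]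
    field_simp
  rw [hcn, one_mul]
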